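/- The surjection ψ_C : C → S₁₈ splits: there exists a group homomorphism s : S₁₈ → C such that ψ_C ∘ s is the identity on S₁₈. (In fact s can be chosen so that its image is the subgroup of C generated by the u_e for e in a spanning tree of T.) -/

import Mathlib

/-- The vertices of the graph `T`: the 18 triangles of the triangulation of
the torus obtained from the 3×3 square grid with opposite sides identified.
A triangle is labelled by its unit cell `(a, b) : (ℤ/3)²` together with a
Boolean which is `false` for the lower triangle (below the diagonal of the
cell) and `true` for the upper one. -/
abbrev VT : Type := (ZMod 3 × ZMod 3) × Bool

/-- The 27 edges of the graph `T`, joining pairs of distinct triangles which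
share a common side: edge `(c, 0)` is dual to the diagonal of the cell `c`,
edge `(c, 1)` to the left side of `c` and edge `(c, 2)` to the bottom side
of `c`. -/
abbrev ET : Type := (ZMod 3 × ZMod 3) × Fin 3

/-- One endpoint of an edge of `T`. -/
def endA (e : ET) : VT :=
  if e.2 = 1 then (e.1, true) else (e.1, false)

/-- The other endpoint of an edge of `T`. -/
def endB (e : ET) : VT :=
  if e.2 = 0 then (e.1, true)
  else if e.2 = 1 then ((e.1.1 - 1, e.1.2), false)
  else ((e.1.1, e.1.2 - 1), true)

/-- Incidence between edges and vertices of `T`. -/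
def incidentT (e : ET) (v : VT) : Prop := v = endA e ∨ v = endB e

/-- For each of the 9 grid vertices `p` of the torus, the six edges (in cyclic
order) of the hexagonal cycle in `T` formed by the six triangles
containing `p`. -/
def hexEdge (p : ZMod 3 × ZMod 3) : Fin 6 → ET := fun k =>
  if k = 0 then (p, 2)
  else if k = 1 then (p, 0)
  else if k = 2 then (p, 1)
  else if k = 3 then ((p.1 - 1, p.2), 2)
  else if k = 4 then ((p.1 - 1, p.2 - 1), 0)
  else ((p.1, p.2 - 1), 1)

/-- The free-group generator corresponding to an edge `e` of `T`. -/
def fe (e : ET) : FreeGroup ET := FreeGroup.of e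

/-- The relations of the presentation of the group `C`: `u_e² = 1`;
`u_e u_f = u_f u_e` when `e, f` have no common vertex;
`u_e u_f u_e = u_f u_e u_f` when `e, f` share exactly one vertex; and the
cyclic relation `u_{e₁} u_{e₂} u_{e₃} u_{e₄} u_{e₅} = u_{e₂} u_{e₃} u_{e₄} u_{e₅} u_{e₆}`
for each of the nine hexagonal cycles. -/
def CRels : Set (FreeGroup ET) :=
  { r | (∃ e : ET, r = fe e * fe e)
      ∨ (∃ e f : ET, (∀ v : VT, ¬ (incidentT e v ∧ incidentT f v)) ∧
            r = fe e * fe f * (fe f * fe e)⁻¹)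
      ∨ (∃ e f : ET, (∃! v : VT, incidentT e v ∧ incidentT f v) ∧
            r = fe e * fe f * fe e * (fe f * fe e * fe f)⁻¹)
      ∨ (∃ p : ZMod 3 × ZMod 3,
            r = (fe (hexEdge p 0) * fe (hexEdge p 1) * fe (hexEdge p 2) *
                 fe (hexEdge p 3) * fe (hexEdge p 4)) *
                (fe (hexEdge p 1) * fe (hexEdge p 2) * fe (hexEdge p 3) *
                 fe (hexEdge p 4) * fe (hexEdge p 5))⁻¹) }

/-- The group `C`, given by the above presentation. -/
abbrev Cgrp : Type := PresentedGroup CRels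

/-- The generator `u_e` of `C` corresponding to the edge `e` of `T`. -/
def uC (e : ET) : Cgrp := PresentedGroup.of e

/-- The transposition in `S₁₈` exchanging the two triangles joined by the
edge `e` of `T`. -/
def tE (e : ET) : Equiv.Perm VT := Equiv.swap (endA e) (endB e)


namespace Stmt16Core

variable {G : Type*} [Group G] (x : ℕ → G)

/-- descending product x k * x (k-1) * ... * x j -/
def dd (k j : ℕ) : G := ((List.range (k+1-j)).map (fun t => x (k - t))).prod

lemma dd_top {k j : ℕ} (h : k < j) : dd x k j = 1 := by
  unfold dd
  rw [Nat.sub_eq_zero_of_le h]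
  simp

lemma dd_succ {k j : ℕ} (h : j ≤ k) : dd x k j = dd x k (j+1) * x j := by
  unfold dd
  have h1 : k + 1 - j = (k - j) + 1 := by omega
  have h2 : k + 1 - (j+1) = k - j := by omega
  rw [h1, h2, List.range_succ, List.map_append, List.prod_append]
  simp only [List.map_cons, List.map_nil, List.prod_cons, List.prod_nil, mul_one]
  congr 2
  omega

variable {n : ℕ}
  (hsq : ∀ i, i < n → x i * x i = 1)
  (hbr : ∀ i, i + 1 < n → x i * x (i+1) * x i = x (i+1) * x i * x (i+1))
  (hcm : ∀ i j, i + 1 < j → j < n → x i * x j = x j * x i)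

section
include hcm

lemma dd_comm {k j i : ℕ} (hk : k < n) (hij : i + 1 < j) :
    Commute (x i) (dd x k j) := by
  apply Commute.list_prod_right
  intro a ha
  simp only [List.mem_map, List.mem_range] at ha
  obtain ⟨t, ht, rfl⟩ := ha
  have h1 : i + 1 < k - t := by omega
  exact hcm i (k - t) h1 (by omega)

end

include hbr hcm in
lemma dd_slide {k : ℕ} (hk : k < n) :
    ∀ m i j, i - j = m → j < i → i ≤ k → dd x k j * x i = x (i-1) * dd x k j := by
  intro m
  induction m with
  | zero => intro i j h hji; omega
  | succ m ih =>
    intro i j h hji hik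
    rcases Nat.lt_or_ge (j+1) i with hlt | hge
    · -- i > j+1
      rw [dd_succ x (by omega : j ≤ k), mul_assoc, hcm j i (by omega) (by omega),
        ← mul_assoc, ih i (j+1) (by omega) hlt hik, mul_assoc]
    · -- i = j+1
      have hij : i = j + 1 := by omega
      subst hij
      have h1 : dd x k j = dd x k (j+2) * x (j+1) * x j := by
        rw [dd_succ x (by omega : j ≤ k), dd_succ x (by omega : j+1 ≤ k)]
      have hcomm : x j * dd x k (j+2) = dd x k (j+2) * x j :=
        (dd_comm x hcm hk (by omega : j + 1 < j + 2)).eq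
      calc dd x k j * x (j+1)
          = dd x k (j+2) * (x (j+1) * x j * x (j+1)) := by
            rw [h1]; simp only [mul_assoc]
        _ = dd x k (j+2) * (x j * x (j+1) * x j) := by rw [← hbr j (by omega)]
        _ = dd x k (j+2) * x j * (x (j+1) * x j) := by simp only [mul_assoc]
        _ = x j * dd x k (j+2) * (x (j+1) * x j) := by rw [← hcomm]
        _ = x j * (dd x k (j+2) * x (j+1) * x j) := by simp only [mul_assoc]
        _ = x j * dd x k j := by rw [h1]
        _ = x (j+1-1) * dd x k j := rfl

include hsq hbr hcm in
lemma card_bound : ∀ k, k ≤ n →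
    (((Subgroup.closure (x '' Set.Iio k) : Subgroup G) : Set G)).Finite ∧
    (((Subgroup.closure (x '' Set.Iio k) : Subgroup G) : Set G)).ncard ≤ (k+1).factorial := by
  classical
  intro k
  induction k with
  | zero =>
    intro _
    have h0 : (Set.Iio 0 : Set ℕ) = ∅ := by ext i; simp
    rw [h0, Set.image_empty, Subgroup.closure_empty]
    constructor
    · exact (Set.finite_singleton 1).subset (by simp [Subgroup.coe_bot, subset_rfl])
    · simp [Subgroup.coe_bot]
  | succ k ih =>
    intro hkn
    have hk : k < n := hkn
    obtain ⟨hfin, hcard⟩ := ih (le_of_lt hk)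
    set H : Subgroup G := Subgroup.closure (x '' Set.Iio k) with hH
    let F : Finset G := hfin.toFinset
    have hFmem : ∀ g, g ∈ F ↔ g ∈ H := fun g => Set.Finite.mem_toFinset hfin
    let FU : Finset G := (Finset.range (k+2)).biUnion (fun j => F.image (fun h => h * dd x k j))
    -- membership in FU
    have hFU : ∀ g, g ∈ FU ↔ ∃ j ≤ k+1, ∃ h ∈ H, g = h * dd x k j := by
      intro g
      simp only [FU, Finset.mem_biUnion, Finset.mem_range, Finset.mem_image]
      constructor
      · rintro ⟨j, hj, h, hh, rfl⟩
        exact ⟨j, by omega, h, (hFmem h).1 hh, rfl⟩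
      · rintro ⟨j, hj, h, hh, rfl⟩
        exact ⟨j, by omega, h, (hFmem h).2 hh, rfl⟩
    -- 1 ∈ FU
    have hone : (1 : G) ∈ FU := by
      rw [hFU]
      exact ⟨k+1, le_rfl, 1, H.one_mem, by rw [dd_top x (by omega), mul_one]⟩
    -- closed under right multiplication by x i, i ≤ k
    have hclosed : ∀ i ≤ k, ∀ g ∈ FU, g * x i ∈ FU := by
      intro i hi g hg
      rw [hFU] at hg ⊢
      obtain ⟨j, hj, h, hh, rfl⟩ := hg
      rcases Nat.lt_trichotomy (i+1) j with hlt | heq | hgt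
      · -- commute case
        refine ⟨j, hj, h * x i, ?_, ?_⟩
        · exact H.mul_mem hh (Subgroup.subset_closure ⟨i, Set.mem_Iio.mpr (by omega), rfl⟩)
        · rw [mul_assoc, ← (dd_comm x hcm hk hlt).eq, ← mul_assoc]
      · -- i + 1 = j : dd j * x i = dd i
        subst heq
        exact ⟨i, by omega, h, hh, by rw [mul_assoc, ← dd_succ x (by omega : i ≤ k)]⟩
      · rcases Nat.lt_or_ge i j with hij | hij
        · omega
        rcases Nat.eq_or_lt_of_le hij with heq2 | hlt2
        · -- i = j
          refine ⟨j+1, by omega, h, hh, ?_⟩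
          rw [← heq2, mul_assoc, dd_succ x (by omega : j ≤ k), mul_assoc, hsq j (by omega),
            mul_one]
        · -- j < i
          refine ⟨j, hj, h * x (i-1), ?_, ?_⟩
          · exact H.mul_mem hh (Subgroup.subset_closure ⟨i-1, Set.mem_Iio.mpr (by omega), rfl⟩)
          · rw [mul_assoc, dd_slide x hbr hcm hk (i - j) i j rfl hlt2 hi, ← mul_assoc]
    -- the stable subgroup
    have hxinv : ∀ i ≤ k, (x i)⁻¹ = x i := by
      intro i hi
      rw [← mul_eq_one_iff_inv_eq, hsq i (by omega)]
    let K : Subgroup G :=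
      { carrier := {g : G | (∀ u ∈ FU, u * g ∈ FU) ∧ (∀ u ∈ FU, u * g⁻¹ ∈ FU)}
        one_mem' := ⟨fun u hu => by simpa using hu, fun u hu => by simpa using hu⟩
        mul_mem' := by
          rintro a b ⟨ha1, ha2⟩ ⟨hb1, hb2⟩
          constructor
          · intro u hu; rw [← mul_assoc]; exact hb1 _ (ha1 _ hu)
          · intro u hu; rw [mul_inv_rev, ← mul_assoc]; exact ha2 _ (hb2 _ hu)
        inv_mem' := by
          rintro a ⟨ha1, ha2⟩
          exact ⟨ha2, by simpa using ha1⟩ }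
    have hsub : Subgroup.closure (x '' Set.Iio (k+1)) ≤ K := by
      rw [Subgroup.closure_le]
      rintro g ⟨i, hi, rfl⟩
      have hik : i ≤ k := by simpa [Nat.lt_succ_iff] using hi
      exact ⟨hclosed i hik, by rw [hxinv i hik]; exact hclosed i hik⟩
    have hsubset : ((Subgroup.closure (x '' Set.Iio (k+1)) : Subgroup G) : Set G) ⊆ ↑FU := by
      intro g hg
      have := (hsub hg).1 1 hone
      simpa using this
    constructor
    · exact Set.Finite.subset FU.finite_toSet hsubset
    · calc ((Subgroup.closure (x '' Set.Iio (k+1)) : Subgroup G) : Set G).ncard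
          ≤ (↑FU : Set G).ncard := Set.ncard_le_ncard hsubset FU.finite_toSet
        _ = FU.card := Set.ncard_coe_finset FU
        _ ≤ ∑ _j ∈ Finset.range (k+2), F.card := by
            refine le_trans (Finset.card_biUnion_le) ?_
            exact Finset.sum_le_sum (fun j _ => Finset.card_image_le)
        _ = (k+2) * F.card := by rw [Finset.sum_const, Finset.card_range, smul_eq_mul]
        _ ≤ (k+2) * (k+1).factorial := by
            refine Nat.mul_le_mul_left _ ?_
            rw [show F.card = ((H : Set G)).ncard from (Set.ncard_eq_toFinset_card _ hfin).symm]
            exact hcard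
        _ = (k+2).factorial := rfl

end Stmt16Core

namespace Stmt16Aux

def mkC : FreeGroup ET →* Cgrp := PresentedGroup.mk CRels

lemma uC_eq (e : ET) : uC e = mkC (fe e) := rfl

lemma rel_one {r : FreeGroup ET} (h : r ∈ CRels) : mkC r = 1 :=
  (QuotientGroup.eq_one_iff _).mpr (Subgroup.subset_normalClosure h)

lemma uC_sq (e : ET) : uC e * uC e = 1 := by
  have h := rel_one (Or.inl ⟨e, rfl⟩)
  rw [map_mul] at h
  exact h

lemma uC_comm (e f : ET) (h : ∀ v : VT, ¬ (incidentT e v ∧ incidentT f v)) :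
    uC e * uC f = uC f * uC e := by
  have h1 := rel_one (Or.inr (Or.inl ⟨e, f, h, rfl⟩))
  rw [map_mul, map_inv, map_mul, map_mul] at h1
  exact mul_inv_eq_one.mp h1

lemma uC_braid (e f : ET) (h : ∃! v : VT, incidentT e v ∧ incidentT f v) :
    uC e * uC f * uC e = uC f * uC e * uC f := by
  have h1 := rel_one (Or.inr (Or.inr (Or.inl ⟨e, f, h, rfl⟩)))
  rw [map_mul, map_mul, map_inv, map_mul, map_mul] at h1
  exact mul_inv_eq_one.mp h1




instance (e : ET) (v : VT) : Decidable (incidentT e v) :=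
  inferInstanceAs (Decidable (_ ∨ _))

/-- the 17 edges of a Hamiltonian path in `T` -/
def pE : Fin 17 → ET :=
  ![((0,0),0),((0,0),1),((2,0),0),((2,0),1),((1,0),0),((1,1),2),((1,1),0),((1,1),1),
    ((0,1),0),((0,1),1),((2,1),0),((2,2),2),((2,2),0),((2,2),1),((1,2),0),((1,2),1),((0,2),0)]

/-- position of a triangle along the Hamiltonian path -/
def idxV (v : VT) : ℕ :=
  6 * (v.1.2).val + 2 * ((v.1.2 - v.1.1).val) + (if v.2 then 1 else 0)

lemma idxV_inj : ∀ v w : VT, idxV v = idxV w → v = w := by decide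
lemma idxV_lt : ∀ v : VT, idxV v < 18 := by decide
lemma idxV_surj : ∀ m : Fin 18, ∃ v : VT, idxV v = m.val := by decide

/-- consecutive triangles are joined by a path edge -/
lemma step_edge : ∀ v w : VT, idxV w = idxV v + 1 →
    ∃ e : ET, (∃ i : Fin 17, pE i = e) ∧ incidentT e v ∧ incidentT e w := by decide

/-- a path edge is only incident to consecutive triangles -/
lemma edge_char : ∀ e : ET, (∃ i : Fin 17, pE i = e) → ∀ a b : VT,
    incidentT e a → incidentT e b →
    a = b ∨ idxV a + 1 = idxV b ∨ idxV b + 1 = idxV a := by decide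

instance {α : Type*} [Fintype α] [DecidableEq α] {p : α → Prop} [DecidablePred p] :
    Decidable (∃! v, p v) :=
  inferInstanceAs (Decidable (∃ v, p v ∧ ∀ w, p w → w = v))

lemma pairs_consec : ∀ i j : Fin 17, (j : ℕ) = (i : ℕ) + 1 →
    ∃! v : VT, incidentT (pE i) v ∧ incidentT (pE j) v := by decide

lemma pairs_far : ∀ i j : Fin 17, (i : ℕ) + 1 < (j : ℕ) →
    ∀ v : VT, ¬ (incidentT (pE i) v ∧ incidentT (pE j) v) := by decide


def T0 : Set ET := Set.range pE

def GT : SimpleGraph VT :=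
  SimpleGraph.fromRel (fun a b : VT => ∃ e ∈ T0, incidentT e a ∧ incidentT e b)

lemma adj_of {a b : VT} (h : GT.Adj a b) :
    a ≠ b ∧ (idxV a + 1 = idxV b ∨ idxV b + 1 = idxV a) := by
  rw [GT, SimpleGraph.fromRel_adj] at h
  obtain ⟨hne, hrel⟩ := h
  refine ⟨hne, ?_⟩
  rcases hrel with ⟨e, he, ha, hb⟩ | ⟨e, he, hb, ha⟩ <;>
  · rcases edge_char e he a b ha hb with h' | h' | h'
    · exact absurd h' hne
    · exact Or.inl h'
    · exact Or.inr h'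

lemma adj_succ {a b : VT} (h : idxV b = idxV a + 1) : GT.Adj a b := by
  rw [GT, SimpleGraph.fromRel_adj]
  refine ⟨fun hab => by rw [hab] at h; omega, Or.inl ?_⟩
  obtain ⟨e, ⟨i, hi⟩, ha, hb⟩ := step_edge a b h
  exact ⟨e, ⟨i, hi⟩, ha, hb⟩

def v0 : VT := ((0,0), false)

lemma reach_v0 : ∀ m : ℕ, ∀ v : VT, idxV v = m → GT.Reachable v v0 := by
  intro m
  induction m with
  | zero => intro v hv; rw [idxV_inj v v0 hv]
  | succ m ih =>
    intro v hv
    have hm : m < 18 := by have := idxV_lt v; omega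
    obtain ⟨w, hw⟩ := idxV_surj ⟨m, hm⟩
    have hw' : idxV w = m := hw
    have hadj : GT.Adj w v := adj_succ (by omega)
    exact (hadj.symm.reachable).trans (ih w hw)

lemma GT_connected : GT.Connected := by
  rw [SimpleGraph.connected_iff]
  exact ⟨fun u v => (reach_v0 _ u rfl).trans (reach_v0 _ v rfl).symm, ⟨v0⟩⟩

lemma no_reach {v w : VT} (h : idxV w = idxV v + 1) :
    ¬ (GT \ SimpleGraph.fromEdgeSet {s(v,w)}).Reachable v w := by
  rintro ⟨p⟩
  have key : ∀ (u u' : VT) (q : (GT \ SimpleGraph.fromEdgeSet {s(v,w)}).Walk u u'),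
      idxV u ≤ idxV v → idxV u' ≤ idxV v := by
    intro u u' q
    induction q with
    | nil => exact id
    | @cons a b c hab q ih =>
      intro ha
      apply ih
      rw [SimpleGraph.sdiff_adj, SimpleGraph.fromEdgeSet_adj] at hab
      obtain ⟨hG, hnot⟩ := hab
      obtain ⟨hne, hcs⟩ := adj_of hG
      rcases hcs with h1 | h1
      · -- idxV a + 1 = idxV b
        rcases Nat.lt_or_ge (idxV a) (idxV v) with h2 | h2
        · omega
        · have hav : a = v := idxV_inj a v (by omega)
          have hbw : b = w := idxV_inj b w (by omega)
          subst hav; subst hbw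
          exact absurd ⟨Set.mem_singleton _, hne⟩ hnot
      · omega
  have := key v w p (le_refl _)
  omega

lemma GT_acyclic : GT.IsAcyclic := by
  rw [SimpleGraph.isAcyclic_iff_forall_adj_isBridge]
  intro v w hadj
  rw [SimpleGraph.isBridge_iff]
  obtain ⟨hne, hcs⟩ := adj_of hadj
  rcases hcs with h1 | h1
  · exact no_reach (by omega)
  · intro hr
    refine no_reach (v := w) (w := v) (by omega) ?_
    rw [Sym2.eq_swap] at hr
    exact hr.symm

lemma GT_isTree : GT.IsTree := ⟨GT_connected, GT_acyclic⟩


/-- each consecutive pair of path vertices is joined by a path edge whose endpoints are them -/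
lemma swap_fact : ∀ v w : VT, idxV w = idxV v + 1 →
    ∃ e : ET, (∃ i : Fin 17, pE i = e) ∧
      ((endA e = v ∧ endB e = w) ∨ (endA e = w ∧ endB e = v)) := by decide

def xx : ℕ → Cgrp := fun i => if h : i < 17 then uC (pE ⟨i, h⟩) else 1

lemma xx_lt {i : ℕ} (h : i < 17) : xx i = uC (pE ⟨i, h⟩) := dif_pos h

lemma xx_sq : ∀ i, i < 17 → xx i * xx i = 1 := fun i h => by
  rw [xx_lt h]; exact uC_sq _

lemma xx_br : ∀ i, i + 1 < 17 → xx i * xx (i+1) * xx i = xx (i+1) * xx i * xx (i+1) := by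
  intro i h
  rw [xx_lt (by omega : i < 17), xx_lt h]
  exact uC_braid _ _ (pairs_consec ⟨i, by omega⟩ ⟨i+1, h⟩ rfl)

lemma xx_cm : ∀ i j, i + 1 < j → j < 17 → xx i * xx j = xx j * xx i := by
  intro i j hij hj
  rw [xx_lt (by omega : i < 17), xx_lt hj]
  exact uC_comm _ _ (pairs_far ⟨i, by omega⟩ ⟨j, hj⟩ hij)

lemma image_eq : xx '' Set.Iio 17 = uC '' T0 := by
  ext g
  constructor
  · rintro ⟨i, hi, rfl⟩
    have hi' : i < 17 := hi
    exact ⟨pE ⟨i, hi'⟩, ⟨⟨i, hi'⟩, rfl⟩, (xx_lt hi').symm⟩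
  · rintro ⟨e, ⟨i, rfl⟩, rfl⟩
    exact ⟨i.val, i.isLt, by simp [xx_lt i.isLt]⟩

lemma swap_mem_step {v w : VT} (h : idxV w = idxV v + 1) :
    Equiv.swap v w ∈ Subgroup.closure (tE '' T0) := by
  obtain ⟨e, he, hor⟩ := swap_fact v w h
  apply Subgroup.subset_closure
  refine ⟨e, he, ?_⟩
  rcases hor with ⟨h1, h2⟩ | ⟨h1, h2⟩
  · rw [tE, h1, h2]
  · rw [tE, h1, h2, Equiv.swap_comm]

lemma swap_mem_aux : ∀ d : ℕ, ∀ v w : VT, idxV w = idxV v + d + 1 →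
    Equiv.swap v w ∈ Subgroup.closure (tE '' T0) := by
  intro d
  induction d with
  | zero => intro v w h; exact swap_mem_step h
  | succ d ih =>
    intro v w h
    have hw : idxV w < 18 := idxV_lt w
    obtain ⟨u, hu⟩ := idxV_surj ⟨idxV v + d + 1, by omega⟩
    have hu' : idxV u = idxV v + d + 1 := hu
    have h1 : Equiv.swap v u ∈ Subgroup.closure (tE '' T0) := ih v u (by omega)
    have h2 : Equiv.swap u w ∈ Subgroup.closure (tE '' T0) := swap_mem_step (by omega)
    have hvu : v ≠ u := fun h' => by
      have := congrArg idxV h'; omega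
    have hvw : v ≠ w := fun h' => by
      have := congrArg idxV h'; omega
    have key := Equiv.swap_mul_swap_mul_swap hvu hvw
    rw [Equiv.swap_comm v w, ← key]
    exact Subgroup.mul_mem _ (Subgroup.mul_mem _ h2 h1) h2

lemma swap_mem {v w : VT} (h : v ≠ w) :
    Equiv.swap v w ∈ Subgroup.closure (tE '' T0) := by
  rcases Nat.lt_trichotomy (idxV v) (idxV w) with h1 | h1 | h1
  · exact swap_mem_aux (idxV w - idxV v - 1) v w (by omega)
  · exact absurd (idxV_inj v w h1) h
  · rw [Equiv.swap_comm]
    exact swap_mem_aux (idxV v - idxV w - 1) w v (by omega)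

lemma closure_tE_top : Subgroup.closure (tE '' T0) = ⊤ := by
  rw [eq_top_iff]
  intro π _
  refine Equiv.Perm.swap_induction_on π (Subgroup.one_mem _) ?_
  intro f x y hxy ih
  exact Subgroup.mul_mem _ (swap_mem hxy) ih

end Stmt16Aux

/-- The surjection `ψ_C : C → S₁₈` splits: there is a homomorphism
`s : S₁₈ → C` with `ψ_C ∘ s = id`; in fact `s` can be chosen so that its
image is the subgroup of `C` generated by the `u_e` for `e` in a spanning
tree `T₀` of `T`. -/
theorem stmt16 (ψ : Cgrp →* Equiv.Perm VT)
    (hψ : ∀ e : ET, ψ (uC e) = tE e) (hsurj : Function.Surjective ψ) :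
    ∃ (T0 : Set ET) (s : Equiv.Perm VT →* Cgrp),
      ψ.comp s = MonoidHom.id (Equiv.Perm VT) ∧
      (SimpleGraph.fromRel
        (fun a b : VT => ∃ e ∈ T0, incidentT e a ∧ incidentT e b)).IsTree ∧
      s.range = Subgroup.closure (uC '' T0) := by
  classical
  open Stmt16Aux in
  refine ⟨T0, ?_⟩
  obtain ⟨hfin, hcard⟩ := Stmt16Core.card_bound xx xx_sq xx_br xx_cm 17 le_rfl
  rw [image_eq] at hfin hcard
  set H : Subgroup Cgrp := Subgroup.closure (uC '' T0) with hHdef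
  haveI : Finite H := hfin.to_subtype
  have hmap : H.map ψ = ⊤ := by
    rw [hHdef, MonoidHom.map_closure, ← Set.image_comp]
    have himg : (ψ ∘ uC) '' T0 = tE '' T0 := by
      apply Set.image_congr
      intro e _
      exact hψ e
    rw [himg, closure_tE_top]
  set f : H →* Equiv.Perm VT := ψ.comp H.subtype with hfdef
  have hfsurj : Function.Surjective f := by
    intro π
    have hπ : π ∈ H.map ψ := hmap ▸ Subgroup.mem_top π
    obtain ⟨h, hh, rfl⟩ := hπ
    exact ⟨⟨h, hh⟩, rfl⟩
  have hVT : Fintype.card VT = 18 := by decide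
  have hcards : Nat.card H ≤ Nat.card (Equiv.Perm VT) := by
    have hP : Nat.card (Equiv.Perm VT) = (17 + 1).factorial := by
      rw [Nat.card_eq_fintype_card, Fintype.card_perm, hVT]
    rw [hP]
    exact le_trans (le_of_eq (Nat.card_coe_set_eq _)) hcard
  have hbij := hfsurj.bijective_of_nat_card_le hcards
  let e : H ≃* Equiv.Perm VT := MulEquiv.ofBijective f hbij
  refine ⟨H.subtype.comp e.symm.toMonoidHom, ?_, ?_, ?_⟩
  · apply MonoidHom.ext
    intro π
    show ψ ((e.symm π : H) : Cgrp) = π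
    have : ψ ((e.symm π : H) : Cgrp) = f (e.symm π) := rfl
    rw [this]
    exact e.apply_symm_apply π
  · exact GT_isTree
  · ext g
    constructor
    · rintro ⟨π, rfl⟩
      exact (e.symm π).2
    · intro hg
      exact ⟨e ⟨g, hg⟩, by simp⟩
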